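/- Conjugation follows from the L-moves: for every n ≥ 2, every braid word w ∈ W_n, and every 1 ≤ i ≤ n−1, the words w and σ_i^{-1} w σ_i are equivalent under the equivalence relation ≈_L on ⋃_{n≥1} W_n generated by word equivalence in the braid groups together with the algebraic L-moves (L_o) and (L_u). Consequently also w ≈_L σ_i w σ_i^{-1}. -/

import Mathlib

/-!
Braid words. A letter `(j, b) : ℕ × Bool` represents the braid generator
`σ_j` if `b = true` and its inverse `σ_j⁻¹` if `b = false` (indices `j ≥ 1`).
-/

/-- A letter `(j, b)` stands for `σ_j^{+1}` if `b = true`, `σ_j^{-1}` if `b = false`. -/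
abbrev BraidLetter : Type := ℕ × Bool

/-- A braid word is a list of letters `σ_j^{±1}`. -/
abbrev BraidWord : Type := List BraidLetter

/-- `memW n w` says `w ∈ Wₙ`: `w` is a word in the letters `σ_1^{±1}, …, σ_{n-1}^{±1}`.
(The natural inclusion `Wₙ ⊆ W_{n+1}` is literal inclusion of sets of words.) -/
def memW (n : ℕ) (w : BraidWord) : Prop := ∀ l ∈ w, 1 ≤ l.1 ∧ l.1 ≤ n - 1

/-- One step of word equivalence in the braid group `Bₙ`: free reduction, the braid
relations `σ_j σ_{j+1} σ_j = σ_{j+1} σ_j σ_{j+1}`, and `σ_j σ_k = σ_k σ_j` for `|j-k| ≥ 2`. -/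
inductive BraidStep (n : ℕ) : BraidWord → BraidWord → Prop
  /-- free reduction: cancel `σ_j^{ε} σ_j^{-ε}` -/
  | cancel (u v : BraidWord) (j : ℕ) (b : Bool) (h1 : 1 ≤ j) (h2 : j ≤ n - 1) :
      BraidStep n (u ++ [(j, b), (j, !b)] ++ v) (u ++ v)
  /-- braid relation `σ_j σ_{j+1} σ_j = σ_{j+1} σ_j σ_{j+1}` for `1 ≤ j ≤ n - 2` -/
  | braid (u v : BraidWord) (j : ℕ) (h1 : 1 ≤ j) (h2 : j + 1 ≤ n - 1) :
      BraidStep n (u ++ [(j, true), (j + 1, true), (j, true)] ++ v)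
                  (u ++ [(j + 1, true), (j, true), (j + 1, true)] ++ v)
  /-- commutation `σ_j σ_k = σ_k σ_j` for `|j - k| ≥ 2` -/
  | comm (u v : BraidWord) (j k : ℕ) (h1 : 1 ≤ j) (h2 : j + 2 ≤ k) (h3 : k ≤ n - 1) :
      BraidStep n (u ++ [(j, true), (k, true)] ++ v) (u ++ [(k, true), (j, true)] ++ v)

/-- Word equivalence in the braid group `Bₙ`: the equivalence relation generated by
free reduction and the braid relations. -/
def braidWordEquiv (n : ℕ) : BraidWord → BraidWord → Prop :=
  Relation.EqvGen (BraidStep n)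

/-- For `w ∈ Wₙ`, the word `w'` obtained by replacing each letter `σ_j^{±1}` with
`i ≤ j` by `σ_{j+1}^{±1}`. -/
def shiftFrom (i : ℕ) (w : BraidWord) : BraidWord :=
  w.map fun l => if i ≤ l.1 then (l.1 + 1, l.2) else l

/-- The word `σ_a σ_{a+1} ⋯ σ_b` (all letters with sign `s`), indices increasing.
Since `σ_0` is not a generator, indices start at `max a 1`; the word is empty if the
index range is empty. -/
def ascWord (a b : ℕ) (s : Bool) : BraidWord :=
  (List.range' (max a 1) (b + 1 - max a 1)).map fun j => (j, s)

/-- The word obtained from an over `L`-move (`L_o`) with sign `s` performed on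
`w₁ w₂ ∈ Wₙ` at position `i`:
`σ_i^{-1}⋯σ_n^{-1} · w₁' · σ_{i-1}^{-1}⋯σ_{n-1}^{-1} σ_n^{±1} σ_{n-1}⋯σ_i · w₂' · σ_n⋯σ_i`. -/
def LoWord (n i : ℕ) (s : Bool) (w₁ w₂ : BraidWord) : BraidWord :=
  ascWord i n false ++ shiftFrom i w₁ ++ ascWord (i - 1) (n - 1) false ++ [(n, s)] ++
    (ascWord i (n - 1) true).reverse ++ shiftFrom i w₂ ++ (ascWord i n true).reverse

/-- The word obtained from an under `L`-move (`L_u`) with sign `s` performed on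
`w₁ w₂ ∈ Wₙ` at position `i`:
`σ_i⋯σ_n · w₁' · σ_{i-1}⋯σ_{n-1} σ_n^{±1} σ_{n-1}^{-1}⋯σ_i^{-1} · w₂' · σ_n^{-1}⋯σ_i^{-1}`. -/
def LuWord (n i : ℕ) (s : Bool) (w₁ w₂ : BraidWord) : BraidWord :=
  ascWord i n true ++ shiftFrom i w₁ ++ ascWord (i - 1) (n - 1) true ++ [(n, s)] ++
    (ascWord i (n - 1) false).reverse ++ shiftFrom i w₂ ++ (ascWord i n false).reverse

/-- Generating moves of Markov equivalence on `⋃_{n≥1} Wₙ`: word equivalence in each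
braid group, conjugation, and bottom stabilization. -/
inductive MarkovRel : BraidWord → BraidWord → Prop
  /-- (a) word equivalence in `Bₙ` -/
  | word (n : ℕ) (u v : BraidWord) (hn : 1 ≤ n) (hu : memW n u)
      (h : braidWordEquiv n u v) : MarkovRel u v
  /-- (b) conjugation `w ≈ σ_i^{-1} w σ_i` -/
  | conj (n i : ℕ) (w : BraidWord) (hn : 1 ≤ n) (hw : memW n w)
      (h1 : 1 ≤ i) (h2 : i ≤ n - 1) :
      MarkovRel w ([(i, false)] ++ w ++ [(i, true)])
  /-- (c) bottom stabilization `w ≈ w · σ_n^{±1}` -/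
  | stab (n : ℕ) (w : BraidWord) (s : Bool) (hn : 1 ≤ n) (hw : memW n w) :
      MarkovRel w (w ++ [(n, s)])

/-- Markov equivalence `≈_M` on `⋃_{n≥1} Wₙ`. -/
def markovEquiv : BraidWord → BraidWord → Prop := Relation.EqvGen MarkovRel

/-- Generating moves of the `L`-move equivalence on `⋃_{n≥1} Wₙ`: word equivalence in
each braid group, and the algebraic `L`-moves `L_o` and `L_u`. -/
inductive LRel : BraidWord → BraidWord → Prop
  /-- (a) word equivalence in `Bₙ` -/
  | word (n : ℕ) (u v : BraidWord) (hn : 1 ≤ n) (hu : memW n u)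
      (h : braidWordEquiv n u v) : LRel u v
  /-- over `L`-move -/
  | Lo (n i : ℕ) (s : Bool) (w₁ w₂ : BraidWord) (hn : 1 ≤ n)
      (h1 : 1 ≤ i) (h2 : i ≤ n) (hw₁ : memW n w₁) (hw₂ : memW n w₂) :
      LRel (w₁ ++ w₂) (LoWord n i s w₁ w₂)
  /-- under `L`-move -/
  | Lu (n i : ℕ) (s : Bool) (w₁ w₂ : BraidWord) (hn : 1 ≤ n)
      (h1 : 1 ≤ i) (h2 : i ≤ n) (hw₁ : memW n w₁) (hw₂ : memW n w₂) :
      LRel (w₁ ++ w₂) (LuWord n i s w₁ w₂)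

/-- The `L`-move equivalence `≈_L` on `⋃_{n≥1} Wₙ`. -/
def lEquiv : BraidWord → BraidWord → Prop := Relation.EqvGen LRel

/-! ### Auxiliary machinery for the proof -/

namespace LConjAux

open Relation

theorem bwe_step {n : ℕ} {u v : BraidWord} (h : BraidStep n u v) : braidWordEquiv n u v :=
  Relation.EqvGen.rel _ _ h

theorem bwe_refl {n : ℕ} (u : BraidWord) : braidWordEquiv n u u := Relation.EqvGen.refl u

theorem bwe_symm {n : ℕ} {u v : BraidWord} (h : braidWordEquiv n u v) : braidWordEquiv n v u :=
  Relation.EqvGen.symm _ _ h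

theorem bwe_trans {n : ℕ} {u v w : BraidWord} (h1 : braidWordEquiv n u v)
    (h2 : braidWordEquiv n v w) : braidWordEquiv n u w :=
  Relation.EqvGen.trans _ _ _ h1 h2

theorem bwe_of_eq {n : ℕ} {u v u' v' : BraidWord} (h : braidWordEquiv n u v)
    (hu : u = u') (hv : v = v') : braidWordEquiv n u' v' := hu ▸ hv ▸ h

/-- swap `(j,b)` past `(k,true)` when `j+2 ≤ k`. -/
theorem bwe_swap_pt {n : ℕ} (C D : BraidWord) {j k : ℕ} (b : Bool)
    (hj1 : 1 ≤ j) (hj2 : j ≤ n - 1) (hk2 : k ≤ n - 1) (hjk : j + 2 ≤ k) :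
    braidWordEquiv n (C ++ (j, b) :: (k, true) :: D) (C ++ (k, true) :: (j, b) :: D) := by
  cases b with
  | true =>
      exact bwe_of_eq (bwe_step (BraidStep.comm C D j k hj1 hjk hk2)) (by simp) (by simp)
  | false =>
      have s1 : braidWordEquiv n (C ++ (j,false) :: (k,true) :: (j,true) :: (j,false) :: D)
                                 (C ++ (j,false) :: (k,true) :: D) :=
        bwe_of_eq (bwe_step (BraidStep.cancel (C ++ [(j,false),(k,true)]) D j true hj1 hj2))
          (by simp) (by simp)
      have s2 : braidWordEquiv n (C ++ (j,false) :: (j,true) :: (k,true) :: (j,false) :: D)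
                                 (C ++ (j,false) :: (k,true) :: (j,true) :: (j,false) :: D) :=
        bwe_of_eq (bwe_step (BraidStep.comm (C ++ [(j,false)]) ((j,false) :: D) j k hj1 hjk hk2))
          (by simp) (by simp)
      have s3 : braidWordEquiv n (C ++ (j,false) :: (j,true) :: (k,true) :: (j,false) :: D)
                                 (C ++ (k,true) :: (j,false) :: D) :=
        bwe_of_eq (bwe_step (BraidStep.cancel C ((k,true) :: (j,false) :: D) j false hj1 hj2))
          (by simp) (by simp)
      exact bwe_trans (bwe_symm s1) (bwe_trans (bwe_symm s2) s3)

/-- swap `(j,b)` past `(k,c)` when `j+2 ≤ k`. -/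
theorem bwe_swap_far {n : ℕ} (C D : BraidWord) {j k : ℕ} (b c : Bool)
    (hj1 : 1 ≤ j) (hj2 : j ≤ n - 1) (hk1 : 1 ≤ k) (hk2 : k ≤ n - 1) (hjk : j + 2 ≤ k) :
    braidWordEquiv n (C ++ (j, b) :: (k, c) :: D) (C ++ (k, c) :: (j, b) :: D) := by
  cases c with
  | true => exact bwe_swap_pt C D b hj1 hj2 hk2 hjk
  | false =>
      have s1 : braidWordEquiv n (C ++ (k,false) :: (k,true) :: (j,b) :: (k,false) :: D)
                                 (C ++ (j,b) :: (k,false) :: D) :=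
        bwe_of_eq (bwe_step (BraidStep.cancel C ((j,b) :: (k,false) :: D) k false hk1 hk2))
          (by simp) (by simp)
      have s2 : braidWordEquiv n (C ++ (k,false) :: (j,b) :: (k,true) :: (k,false) :: D)
                                 (C ++ (k,false) :: (k,true) :: (j,b) :: (k,false) :: D) :=
        bwe_of_eq (bwe_swap_pt (C ++ [(k,false)]) ((k,false) :: D) b hj1 hj2 hk2 hjk)
          (by simp) (by simp)
      have s3 : braidWordEquiv n (C ++ (k,false) :: (j,b) :: (k,true) :: (k,false) :: D)
                                 (C ++ (k,false) :: (j,b) :: D) :=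
        bwe_of_eq (bwe_step (BraidStep.cancel (C ++ [(k,false),(j,b)]) D k true hk1 hk2))
          (by simp) (by simp)
      exact bwe_trans (bwe_symm s1) (bwe_trans (bwe_symm s2) s3)

/-- swap two letters with the same index. -/
theorem bwe_swap_same {n : ℕ} (C D : BraidWord) {j : ℕ} (b c : Bool)
    (hj1 : 1 ≤ j) (hj2 : j ≤ n - 1) :
    braidWordEquiv n (C ++ (j, b) :: (j, c) :: D) (C ++ (j, c) :: (j, b) :: D) := by
  by_cases h : b = c
  · subst h; exact bwe_refl _
  · have hc : c = !b := by cases b <;> cases c <;> simp_all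
    subst hc
    have s1 : braidWordEquiv n (C ++ (j,b) :: (j,!b) :: D) (C ++ D) :=
      bwe_of_eq (bwe_step (BraidStep.cancel C D j b hj1 hj2)) (by simp) rfl
    have s2 : braidWordEquiv n (C ++ (j,!b) :: (j,b) :: D) (C ++ D) :=
      bwe_of_eq (bwe_step (BraidStep.cancel C D j (!b) hj1 hj2)) (by simp) rfl
    exact bwe_trans s1 (bwe_symm s2)

/-- general adjacent-letter swap. -/
theorem bwe_swap {n : ℕ} (C D : BraidWord) {j k : ℕ} (b c : Bool)
    (hj1 : 1 ≤ j) (hj2 : j ≤ n - 1) (hk1 : 1 ≤ k) (hk2 : k ≤ n - 1)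
    (h : j = k ∨ j + 2 ≤ k ∨ k + 2 ≤ j) :
    braidWordEquiv n (C ++ (j, b) :: (k, c) :: D) (C ++ (k, c) :: (j, b) :: D) := by
  rcases h with h | h | h
  · subst h; exact bwe_swap_same C D b c hj1 hj2
  · exact bwe_swap_far C D b c hj1 hj2 hk1 hk2 h
  · exact bwe_symm (bwe_swap_far C D c b hk1 hk2 hj1 hj2 h)

/-- move a letter `(j,b)` rightwards through a word `X` all of whose letters have
index equal to `j` or differing from `j` by at least `2`. -/
theorem bwe_move {n j : ℕ} (b : Bool) (hj1 : 1 ≤ j) (hj2 : j ≤ n - 1) :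
    ∀ (X C D : BraidWord),
      (∀ l ∈ X, (1 ≤ l.1 ∧ l.1 ≤ n - 1) ∧ (l.1 = j ∨ l.1 + 2 ≤ j ∨ j + 2 ≤ l.1)) →
      braidWordEquiv n (C ++ (j, b) :: (X ++ D)) (C ++ (X ++ (j, b) :: D)) := by
  intro X
  induction X with
  | nil => intro C D _; exact bwe_refl _
  | cons l X ih =>
      intro C D hX
      obtain ⟨⟨hl1, hl2⟩, hl3⟩ := hX l (by simp)
      have s1 : braidWordEquiv n (C ++ (j, b) :: l :: (X ++ D)) (C ++ l :: (j, b) :: (X ++ D)) := by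
        have := bwe_swap (n := n) C (X ++ D) (j := j) (k := l.1) b l.2 hj1 hj2 hl1 hl2 (by omega)
        simpa using this
      have s2 := ih (C ++ [l]) D (fun m hm => hX m (by simp [hm]))
      exact bwe_trans s1 (bwe_of_eq s2 (by simp) (by simp))

/-- cancel a conjugating pair `(j,b) ⋯ (j,!b)` around such a word `X`. -/
theorem bwe_annihilate {n j : ℕ} (b : Bool) (hj1 : 1 ≤ j) (hj2 : j ≤ n - 1)
    (X C D : BraidWord)
    (hX : ∀ l ∈ X, (1 ≤ l.1 ∧ l.1 ≤ n - 1) ∧ (l.1 = j ∨ l.1 + 2 ≤ j ∨ j + 2 ≤ l.1)) :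
    braidWordEquiv n (C ++ (j, b) :: (X ++ (j, !b) :: D)) (C ++ (X ++ D)) := by
  have s1 := bwe_move b hj1 hj2 X C ((j, !b) :: D) hX
  have s2 : braidWordEquiv n (C ++ (X ++ (j, b) :: (j, !b) :: D)) (C ++ (X ++ D)) :=
    bwe_of_eq (bwe_step (BraidStep.cancel (C ++ X) D j b hj1 hj2)) (by simp) (by simp)
  exact bwe_trans s1 s2

end LConjAux

namespace LConjAux

theorem mem_ascWord {a b : ℕ} {s : Bool} {l : BraidLetter} (h : l ∈ ascWord a b s) :
    1 ≤ l.1 ∧ l.1 ≤ b := by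
  simp only [ascWord, List.mem_map, List.mem_range'_1] at h
  obtain ⟨j, ⟨hj1, hj2⟩, rfl⟩ := h
  constructor <;> omega

theorem shiftFrom_append (i : ℕ) (u v : BraidWord) :
    shiftFrom i (u ++ v) = shiftFrom i u ++ shiftFrom i v := List.map_append

theorem shiftFrom_nil (i : ℕ) : shiftFrom i ([] : BraidWord) = [] := rfl

theorem mem_shiftFrom {i : ℕ} {w : BraidWord} {l : BraidLetter} (h : l ∈ shiftFrom i w) :
    ∃ m ∈ w, (m.1 < i ∧ l = m) ∨ (i ≤ m.1 ∧ l = (m.1 + 1, m.2)) := by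
  simp only [shiftFrom, List.mem_map] at h
  obtain ⟨m, hm, rfl⟩ := h
  refine ⟨m, hm, ?_⟩
  by_cases hc : i ≤ m.1
  · right; simp [hc]
  · left; simp [hc]; omega

theorem memW_shiftFrom {n i : ℕ} {w : BraidWord} (hw : memW n w) :
    ∀ l ∈ shiftFrom i w, 1 ≤ l.1 ∧ l.1 ≤ n := by
  intro l hl
  obtain ⟨m, hm, hc⟩ := mem_shiftFrom hl
  obtain ⟨ha, hb⟩ := hw m hm
  rcases hc with ⟨_, rfl⟩ | ⟨_, rfl⟩
  · exact ⟨ha, by omega⟩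
  · exact ⟨by dsimp; omega, by dsimp; omega⟩

theorem memW_LuWord {n i : ℕ} (s : Bool) {w₁ w₂ : BraidWord} (hn : 1 ≤ n)
    (hw1 : memW n w₁) (hw2 : memW n w₂) :
    memW (n + 1) (LuWord n i s w₁ w₂) := by
  intro l hl
  have hgoal : 1 ≤ l.1 ∧ l.1 ≤ n := by
    simp only [LuWord, List.append_assoc, List.mem_append, List.mem_reverse,
      List.mem_singleton] at hl
    rcases hl with hl | hl | hl | hl | hl | hl | hl
    · have := mem_ascWord hl; omega
    · exact memW_shiftFrom hw1 l hl
    · have := mem_ascWord hl; omega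
    · subst hl; simp; omega
    · have := mem_ascWord hl; omega
    · exact memW_shiftFrom hw2 l hl
    · have := mem_ascWord hl; omega
  simpa using hgoal

/-- The key braid word equivalence: the two doubly-`L`-moved words agree. -/
theorem bwe_key (n i : ℕ) (x : BraidWord) (b : Bool)
    (hi1 : 1 ≤ i) (hi2 : i ≤ n - 1) (hn : 2 ≤ n) (hx : memW n x) :
    braidWordEquiv (n + 2)
      (LuWord (n+1) (i+2) true [] (LuWord n i true [] ((i, b) :: (x ++ [(i, !b)]))))
      (LuWord (n+1) (i+2) true [] (LuWord n i true [] x)) := by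
  have hni : ¬ (i + 2 ≤ i + 1) := by omega
  have hii : i ≤ i := le_refl i
  -- the conjugated core
  set X : BraidWord := shiftFrom (i+2) (shiftFrom i x) with hXdef
  -- the common prefix and suffix
  set P : BraidWord :=
    ascWord (i+2) (n+1) true ++ (ascWord (i+2-1) (n+1-1) true ++ ([((n+1 : ℕ), true)] ++
      ((ascWord (i+2) (n+1-1) false).reverse ++ (shiftFrom (i+2) (ascWord i n true) ++
        (shiftFrom (i+2) (ascWord (i-1) (n-1) true) ++ (shiftFrom (i+2) [((n : ℕ), true)] ++
          shiftFrom (i+2) ((ascWord i (n-1) false).reverse))))))) with hPdef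
  set Q : BraidWord :=
    shiftFrom (i+2) ((ascWord i n false).reverse) ++ (ascWord (i+2) (n+1) false).reverse
    with hQdef
  have hX : ∀ l ∈ X, (1 ≤ l.1 ∧ l.1 ≤ (n + 2) - 1) ∧
      (l.1 = i + 1 ∨ l.1 + 2 ≤ i + 1 ∨ (i + 1) + 2 ≤ l.1) := by
    intro l hl
    rw [hXdef] at hl
    obtain ⟨m2, hm2, hc2⟩ := mem_shiftFrom hl
    obtain ⟨m1, hm1, hc1⟩ := mem_shiftFrom hm2
    have hb := hx m1 hm1
    rcases hc1 with ⟨u1, rfl⟩ | ⟨u1, e1⟩ <;> rcases hc2 with ⟨u2, rfl⟩ | ⟨u2, rfl⟩ <;>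
      simp_all <;> omega
  have key := bwe_annihilate (n := n + 2) (j := i + 1) b (by omega) (by omega) X P Q hX
  refine bwe_of_eq key ?_ ?_
  · -- P ++ (i+1,b) :: (X ++ (i+1,!b) :: Q) = LHS
    rw [hPdef, hQdef, hXdef]
    simp only [LuWord, shiftFrom_append, shiftFrom_nil, List.nil_append, List.append_assoc]
    have e0 : shiftFrom i ((i, b) :: (x ++ [(i, !b)]))
        = (i+1, b) :: (shiftFrom i x ++ [(i+1, !b)]) := by
      simp [shiftFrom]
    have e1 : shiftFrom (i+2) ((i+1, b) :: (shiftFrom i x ++ [(i+1, !b)]))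
        = (i+1, b) :: (shiftFrom (i+2) (shiftFrom i x) ++ [(i+1, !b)]) := by
      simp [shiftFrom, hni]
    rw [e0, e1]
    simp [List.append_assoc]
  · rw [hPdef, hQdef, hXdef]
    simp only [LuWord, shiftFrom_append, shiftFrom_nil, List.nil_append, List.append_assoc]

end LConjAux

namespace LConjAux

/-- conjugation by a single letter, cons form. -/
theorem lconj (n i : ℕ) (w : BraidWord) (hn : 2 ≤ n) (hw : memW n w)
    (h1 : 1 ≤ i) (h2 : i ≤ n - 1) (b : Bool) :
    lEquiv w ((i, b) :: (w ++ [(i, !b)])) := by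
  have hn1 : (1 : ℕ) ≤ n := by omega
  have hin : i ≤ n := by omega
  have hnilW : memW n ([] : BraidWord) := by intro l hl; simp at hl
  have hnilW' : memW (n + 1) ([] : BraidWord) := by intro l hl; simp at hl
  have hconj : memW n ((i, b) :: (w ++ [(i, !b)])) := by
    intro l hl
    simp at hl
    rcases hl with rfl | hl | rfl
    · exact ⟨h1, h2⟩
    · exact hw l hl
    · exact ⟨h1, h2⟩
  have hF : memW (n + 1) (LuWord n i true [] w) := memW_LuWord true (by omega) hnilW hw
  have hG : memW (n + 1) (LuWord n i true [] ((i, b) :: (w ++ [(i, !b)]))) :=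
    memW_LuWord true (by omega) hnilW hconj
  have s1 : LRel w (LuWord n i true [] w) := by
    have := LRel.Lu n i true [] w hn1 h1 hin hnilW hw
    simpa using this
  have s2 : LRel ((i, b) :: (w ++ [(i, !b)]))
      (LuWord n i true [] ((i, b) :: (w ++ [(i, !b)]))) := by
    have := LRel.Lu n i true [] ((i, b) :: (w ++ [(i, !b)])) hn1 h1 hin hnilW hconj
    simpa using this
  have s3 : LRel (LuWord n i true [] w)
      (LuWord (n+1) (i+2) true [] (LuWord n i true [] w)) := by
    have := LRel.Lu (n+1) (i+2) true [] (LuWord n i true [] w)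
      (by omega) (by omega) (by omega) hnilW' hF
    simpa using this
  have s4 : LRel (LuWord n i true [] ((i, b) :: (w ++ [(i, !b)])))
      (LuWord (n+1) (i+2) true [] (LuWord n i true [] ((i, b) :: (w ++ [(i, !b)])))) := by
    have := LRel.Lu (n+1) (i+2) true [] (LuWord n i true [] ((i, b) :: (w ++ [(i, !b)])))
      (by omega) (by omega) (by omega) hnilW' hG
    simpa using this
  have s5 : LRel (LuWord (n+1) (i+2) true [] (LuWord n i true [] ((i, b) :: (w ++ [(i, !b)]))))
      (LuWord (n+1) (i+2) true [] (LuWord n i true [] w)) :=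
    LRel.word (n + 2) _ _ (by omega) (memW_LuWord true (by omega) hnilW' hG)
      (bwe_key n i w b h1 h2 hn hw)
  exact Relation.EqvGen.trans _ _ _ (Relation.EqvGen.rel _ _ s1)
    (Relation.EqvGen.trans _ _ _ (Relation.EqvGen.rel _ _ s3)
      (Relation.EqvGen.trans _ _ _ (Relation.EqvGen.symm _ _ (Relation.EqvGen.rel _ _ s5))
        (Relation.EqvGen.trans _ _ _ (Relation.EqvGen.symm _ _ (Relation.EqvGen.rel _ _ s4))
          (Relation.EqvGen.symm _ _ (Relation.EqvGen.rel _ _ s2)))))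

end LConjAux


/-- conjugation follows from the `L`-moves. For every `n ≥ 2`, every
braid word `w ∈ Wₙ` and every `1 ≤ i ≤ n-1`, we have `w ≈_L σ_i^{-1} w σ_i`, and
consequently also `w ≈_L σ_i w σ_i^{-1}`. -/
theorem conjugation_follows_from_L_moves (n i : ℕ) (w : BraidWord)
    (hn : 2 ≤ n) (hw : memW n w) (h1 : 1 ≤ i) (h2 : i ≤ n - 1) :
    lEquiv w ([(i, false)] ++ w ++ [(i, true)]) ∧
    lEquiv w ([(i, true)] ++ w ++ [(i, false)]) := by
  constructor
  · have h := LConjAux.lconj n i w hn hw h1 h2 false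
    have e : ((i, false) :: (w ++ [(i, !false)])) = [(i, false)] ++ w ++ [(i, true)] := by simp
    rwa [e] at h
  · have h := LConjAux.lconj n i w hn hw h1 h2 true
    have e : ((i, true) :: (w ++ [(i, !true)])) = [(i, true)] ++ w ++ [(i, false)] := by simp
    rwa [e] at h
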